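/- arXiv:1111.5247 — 2 statements merged into one kernel-verified Lean document; each statement's English description precedes it below -/
import Mathlib

section
/- Let T be a natural number and let C = ℂ^{T+1} with standard orthonormal basis e₀, …, e_T. Let W be a finite-dimensional complex inner product space, let w₀, …, w_T ∈ W be unit vectors, and define η = (1/√(T+1)) Σ_{t=0}^{T} e_t ⊗ w_t in C ⊗ W. Let Π be an orthogonal projection on W and let H_out be the operator on C ⊗ W given by (the rank-one projection onto e_T) ⊗ Π. Suppose there is a unitary V on W with w_T = V w₀, and suppose φ ∈ W is a unit vector and ε, s ≥ 0 satisfy |⟨w₀, φ⟩|² ≥ 1 − ε and ⟨V φ, Π (V φ)⟩ ≥ 1 − s. Then ⟨η, H_out η⟩ ≥ (1 − s − 2√ε)/(T+1). -/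
open scoped InnerProductSpace Kronecker Matrix

/-- The tensor product of two vectors: `(u ⊗ v)(i,j) = uᵢ · vⱼ`. -/
noncomputable def tensorVec {ι κ : Type*} [Fintype ι] [Fintype κ]
    (u : EuclideanSpace ℂ ι) (v : EuclideanSpace ℂ κ) : EuclideanSpace ℂ (ι × κ) :=
  WithLp.toLp 2 (fun p => u p.1 * v p.2)

private lemma key_real (u x c qs s ε : ℝ) (hu : 0 ≤ u) (hx : 0 ≤ x) (hc : 0 ≤ c)
    (hqs : 0 ≤ qs) (hqs1 : qs ≤ 1) (hsum : x^2 + c^2 = 1)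
    (htri : c*qs ≤ u + x) (hq : 1 - s ≤ qs^2) (hxe : x ≤ Real.sqrt ε) :
    1 - s - 2*Real.sqrt ε ≤ u^2 := by
  have hc1 : c ≤ 1 := by nlinarith [sq_nonneg x]
  have hcq1 : c * qs ≤ 1 := by nlinarith
  have hqx : qs^2 - 2*x ≤ u^2 := by
    rcases le_or_gt (c*qs) x with h | h
    · rcases le_or_gt (1/2 : ℝ) x with hx2 | hx2
      · nlinarith
      · nlinarith [mul_le_mul h h (by positivity : (0:ℝ) ≤ c*qs) hx, sq_nonneg qs, sq_nonneg x]
    · have hu' : c*qs - x ≤ u := by linarith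
      have h2 : (c*qs - x)^2 ≤ u^2 := by nlinarith
      nlinarith [mul_nonneg hx (by linarith : (0:ℝ) ≤ 1 - c*qs),
        mul_nonneg (sq_nonneg x) (by nlinarith : (0:ℝ) ≤ 1 - qs^2)]
  nlinarith [Real.sqrt_nonneg ε]

set_option maxHeartbeats 1000000 in
/-- **Lemma (Step three), abstract form.** Let `η = (1/√(T+1)) Σ_t e_t ⊗ w_t` be a history
state, `Π` an orthogonal projection on `W`, and `H_out = |e_T⟩⟨e_T| ⊗ Π`. If `w_T = V w₀`
for a unitary `V`, and `φ` is a unit vector with `|⟨w₀, φ⟩|² ≥ 1 − ε` and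
`⟨V φ, Proj (V φ)⟩ ≥ 1 − s`, then `⟨η, H_out η⟩ ≥ (1 − s − 2√ε)/(T+1)`. -/
theorem step_three
    (T : ℕ) {ι : Type*} [Fintype ι] [DecidableEq ι] [Nonempty ι]
    (w : Fin (T + 1) → EuclideanSpace ℂ ι) (hw : ∀ t, ‖w t‖ = 1)
    (η : EuclideanSpace ℂ (Fin (T + 1) × ι))
    (hη : η = ((Real.sqrt (T + 1) : ℂ))⁻¹ •
      ∑ t : Fin (T + 1), tensorVec (EuclideanSpace.single t 1) (w t))
    (Proj : EuclideanSpace ℂ ι →ₗ[ℂ] EuclideanSpace ℂ ι)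
    (hProj_sa : ∀ x y, ⟪Proj x, y⟫_ℂ = ⟪x, Proj y⟫_ℂ) (hProj_idem : Proj ∘ₗ Proj = Proj)
    (Hout : EuclideanSpace ℂ (Fin (T + 1) × ι) →ₗ[ℂ] EuclideanSpace ℂ (Fin (T + 1) × ι))
    (hHout : Hout = Matrix.toEuclideanLin
      ((Matrix.single (Fin.last T) (Fin.last T) (1 : ℂ)) ⊗ₖ
        (Matrix.toEuclideanLin.symm Proj)))
    (V : EuclideanSpace ℂ ι ≃ₗᵢ[ℂ] EuclideanSpace ℂ ι)
    (hV : w (Fin.last T) = V (w 0))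
    (φ : EuclideanSpace ℂ ι) (hφ : ‖φ‖ = 1)
    (ε s : ℝ) (hε : 0 ≤ ε) (hs : 0 ≤ s)
    (hoverlap : 1 - ε ≤ ‖⟪w 0, φ⟫_ℂ‖ ^ 2)
    (haccept : 1 - s ≤ (⟪V φ, Proj (V φ)⟫_ℂ).re) :
    (1 - s - 2 * Real.sqrt ε) / (T + 1) ≤ (⟪η, Hout η⟫_ℂ).re := by
  -- projection facts
  have hPP : ∀ v, Proj (Proj v) = Proj v := fun v => DFunLike.congr_fun hProj_idem v
  have hexp : ∀ v : EuclideanSpace ℂ ι, (⟪v, Proj v⟫_ℂ) = ((‖Proj v‖^2 : ℝ) : ℂ) := by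
    intro v
    have h1 : ⟪Proj v, Proj v⟫_ℂ = ⟪v, Proj (Proj v)⟫_ℂ := hProj_sa v (Proj v)
    rw [hPP] at h1
    rw [← h1, inner_self_eq_norm_sq_to_K]
    norm_cast
  have hcontr : ∀ v : EuclideanSpace ℂ ι, ‖Proj v‖ ≤ ‖v‖ := by
    intro v
    have h1 : ‖Proj v‖^2 = (⟪v, Proj v⟫_ℂ).re := by
      rw [hexp]; exact (Complex.ofReal_re _).symm
    have h2 : (⟪v, Proj v⟫_ℂ).re ≤ ‖(⟪v, Proj v⟫_ℂ)‖ := Complex.re_le_norm _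
    have h3 : ‖(⟪v, Proj v⟫_ℂ)‖ ≤ ‖v‖ * ‖Proj v‖ := norm_inner_le_norm _ _
    nlinarith [norm_nonneg (Proj v), norm_nonneg v]
  set wl := w (Fin.last T) with hwl
  -- value of η pointwise
  have hηapp : ∀ p : Fin (T+1) × ι, η p = ((Real.sqrt (T + 1) : ℂ))⁻¹ * w p.1 p.2 := by
    intro p
    subst hη
    rw [PiLp.smul_apply, smul_eq_mul]
    congr 1
    rw [WithLp.ofLp_sum, Finset.sum_apply]
    simp [tensorVec, EuclideanSpace.single_apply]
  -- value of Hout η pointwise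
  have hHapp : ∀ p : Fin (T+1) × ι, (Hout η) p =
      if p.1 = Fin.last T then ((Real.sqrt (T + 1) : ℂ))⁻¹ * (Proj wl) p.2 else 0 := by
    intro p
    have hM : ∀ (u : EuclideanSpace ℂ ι) (i : ι),
        (Proj u) i = ∑ j, (Matrix.toEuclideanLin.symm Proj) i j * u j := by
      intro u i
      conv_lhs => rw [← Matrix.toEuclideanLin.apply_symm_apply Proj]
      rw [Matrix.toEuclideanLin_apply]
      simp [Matrix.mulVec, dotProduct]
    have key : (Hout η) p = if p.1 = Fin.last T then
        (Proj (WithLp.toLp 2 (fun i => η (Fin.last T, i)) : EuclideanSpace ℂ ι)) p.2 else 0 := by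
      rw [hHout, Matrix.toEuclideanLin_apply]
      simp only [WithLp.ofLp_toLp, Matrix.mulVec, dotProduct,
        Matrix.kroneckerMap_apply, Fintype.sum_prod_type, Matrix.single]
      simp only [Matrix.of_apply, ite_mul, one_mul, zero_mul]
      rw [Finset.sum_eq_single (Fin.last T)]
      · by_cases h : p.1 = Fin.last T <;> simp [h, eq_comm, hM]
      · intro b _ hb
        simp [Ne.symm hb]
      · simp
    rw [key]
    have hfun : (WithLp.toLp 2 (fun i => η (Fin.last T, i)) : EuclideanSpace ℂ ι)
        = ((Real.sqrt (T + 1) : ℂ))⁻¹ • wl := by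
      ext i
      rw [hηapp (Fin.last T, i)]
      rfl
    rw [hfun, map_smul]
    rfl
  -- compute the inner product
  have hinner : ⟪η, Hout η⟫_ℂ = ((((T:ℝ) + 1)⁻¹ : ℝ) : ℂ) * ⟪wl, Proj wl⟫_ℂ := by
    rw [PiLp.inner_apply]
    simp only [RCLike.inner_apply]
    rw [Fintype.sum_prod_type]
    rw [Finset.sum_eq_single (Fin.last T)]
    · have : ∀ i, (starRingEnd ℂ) (η (Fin.last T, i)) * (Hout η) (Fin.last T, i)
          = ((((T:ℝ) + 1)⁻¹ : ℝ) : ℂ) * ((starRingEnd ℂ) (wl i) * (Proj wl) i) := by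
        intro i
        rw [hηapp (Fin.last T, i), hHapp (Fin.last T, i)]
        simp only [if_pos rfl]
        have hc : (starRingEnd ℂ) ((Real.sqrt (T + 1) : ℂ))⁻¹ * ((Real.sqrt (T + 1) : ℂ))⁻¹
            = ((((T:ℝ) + 1)⁻¹ : ℝ) : ℂ) := by
          have h : ((Real.sqrt ((T:ℝ)+1) : ℝ) : ℂ) * ((Real.sqrt ((T:ℝ)+1) : ℝ) : ℂ)
              = ((((T:ℝ)+1) : ℝ) : ℂ) := by
            rw [← Complex.ofReal_mul, Real.mul_self_sqrt (by positivity)]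
          rw [map_inv₀, Complex.conj_ofReal, ← mul_inv, h, Complex.ofReal_inv]
        calc (starRingEnd ℂ) ((Real.sqrt (T + 1) : ℂ)⁻¹ * wl i)
              * ((Real.sqrt (T + 1) : ℂ)⁻¹ * (Proj wl) i)
            = ((starRingEnd ℂ) ((Real.sqrt (T + 1) : ℂ))⁻¹ * ((Real.sqrt (T + 1) : ℂ))⁻¹)
              * ((starRingEnd ℂ) (wl i) * (Proj wl) i) := by
              rw [map_mul, map_inv₀]; ring
          _ = _ := by rw [hc]
      rw [PiLp.inner_apply]
      simp only [RCLike.inner_apply]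
      rw [Finset.mul_sum]
      exact Finset.sum_congr rfl fun i _ => by rw [mul_comm, this i]; ring
    · intro b _ hb
      apply Finset.sum_eq_zero
      intro i _
      rw [hHapp (b, i)]
      simp [hb]
    · simp
  -- reduce to the real statement
  rw [hinner, Complex.re_ofReal_mul]
  have hTpos : (0:ℝ) < (T:ℝ) + 1 := by positivity
  have hre : (⟪wl, Proj wl⟫_ℂ).re = ‖Proj wl‖^2 := by
    rw [hexp]; exact Complex.ofReal_re _
  rw [hre, div_eq_inv_mul]
  apply mul_le_mul_of_nonneg_left _ (by positivity)
  -- the core estimate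
  set c₀ : ℂ := ⟪φ, w 0⟫_ℂ with hc₀
  set r : EuclideanSpace ℂ ι := w 0 - c₀ • φ with hr
  have hφφ : ⟪φ, φ⟫_ℂ = 1 := by
    rw [inner_self_eq_norm_sq_to_K, hφ]; norm_num
  have horth : ⟪φ, r⟫_ℂ = 0 := by
    rw [hr, inner_sub_right, inner_smul_right, hφφ, mul_one, hc₀, sub_self]
  have hw0 : w 0 = c₀ • φ + r := by rw [hr]; abel
  have hpyth : ‖w 0‖^2 = ‖c₀ • φ‖^2 + ‖r‖^2 := by
    rw [hw0, @norm_add_sq ℂ, inner_smul_left, horth]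
    simp
  have hnc₀φ : ‖c₀ • φ‖ = ‖c₀‖ := by rw [norm_smul, hφ, mul_one]
  have hx2 : ‖r‖^2 + ‖c₀‖^2 = 1 := by
    have := hpyth
    rw [hnc₀φ, hw 0] at this
    rw [one_pow] at this
    linarith
  have hovl : ‖⟪w 0, φ⟫_ℂ‖ = ‖c₀‖ := by
    rw [hc₀, ← inner_conj_symm]
    exact RCLike.norm_conj (⟪φ, w 0⟫_ℂ)
  have hxε : ‖r‖ ≤ Real.sqrt ε := by
    have h1 : ‖r‖^2 ≤ ε := by
      rw [hovl] at hoverlap; nlinarith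
    calc ‖r‖ = Real.sqrt (‖r‖^2) := by rw [Real.sqrt_sq (norm_nonneg r)]
      _ ≤ Real.sqrt ε := Real.sqrt_le_sqrt h1
  have hdecomp : Proj (V (w 0)) = c₀ • Proj (V φ) + Proj (V r) := by
    rw [hw0]
    simp [map_add, map_smul]
  have htri : ‖c₀‖ * ‖Proj (V φ)‖ ≤ ‖Proj (V (w 0))‖ + ‖r‖ := by
    have h1 : ‖c₀ • Proj (V φ)‖ = ‖c₀‖ * ‖Proj (V φ)‖ := norm_smul _ _
    have h2 : c₀ • Proj (V φ) = Proj (V (w 0)) - Proj (V r) := by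
      rw [hdecomp]; abel
    have h3 : ‖Proj (V r)‖ ≤ ‖r‖ := by
      calc ‖Proj (V r)‖ ≤ ‖V r‖ := hcontr _
        _ = ‖r‖ := V.norm_map r
    calc ‖c₀‖ * ‖Proj (V φ)‖ = ‖Proj (V (w 0)) - Proj (V r)‖ := by rw [← h1, h2]
      _ ≤ ‖Proj (V (w 0))‖ + ‖Proj (V r)‖ := norm_sub_le _ _
      _ ≤ ‖Proj (V (w 0))‖ + ‖r‖ := by linarith
  have hqs1 : ‖Proj (V φ)‖ ≤ 1 := by
    calc ‖Proj (V φ)‖ ≤ ‖V φ‖ := hcontr _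
      _ = 1 := by rw [V.norm_map, hφ]
  have hq : 1 - s ≤ ‖Proj (V φ)‖^2 := by
    have := haccept
    rw [hexp (V φ), Complex.ofReal_re] at this
    exact this
  have hwlV : ‖Proj wl‖ = ‖Proj (V (w 0))‖ := by rw [hV]
  rw [hwlV]
  exact key_real _ _ _ _ _ _ (norm_nonneg _) (norm_nonneg _) (norm_nonneg _)
    (norm_nonneg _) hqs1 hx2 htri hq hxε
end

section
/- Let T ≥ 1 be a natural number, let C = ℂ^{T+1} with standard orthonormal basis e₀, …, e_T, and set α = (1/√(T+1)) Σ_{t=0}^{T} e_t. Let A be a finite-dimensional complex inner product space of dimension at least 2 with a unit vector a₀, and let P be a nontrivial finite-dimensional complex inner product space. In H = C ⊗ A ⊗ P, define the subspaces L₁ = span{e₀ ⊗ a₀ ⊗ p : p ∈ P} + span{e_t ⊗ a ⊗ p : 1 ≤ t ≤ T, a ∈ A, p ∈ P}, L₂ = span{α ⊗ a ⊗ p : a ∈ A, p ∈ P}, and L = span{α ⊗ a₀ ⊗ p : p ∈ P}. Then for every unit vector y ∈ L₂ orthogonal to L, the squared norm of the orthogonal projection of y onto L₁ is at most 1 − 1/(T+1).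 In particular, cos²θ ≤ 1 − 1/(T+1), where cos θ = sup{|⟨x, y⟩| : x ∈ L₁ ∩ L^⊥, y ∈ L₂ ∩ L^⊥, ‖x‖ = ‖y‖ = 1}. -/
open scoped InnerProductSpace

namespace AngleBound

variable {ι κ : Type*} [Fintype ι] [Fintype κ]

/-- `tensorVec u` as a linear map in the second argument. -/
noncomputable def tensorL (u : EuclideanSpace ℂ ι) :
    EuclideanSpace ℂ κ →ₗ[ℂ] EuclideanSpace ℂ (ι × κ) where
  toFun v := tensorVec u v
  map_add' v v' := by
    ext p
    simp [tensorVec, PiLp.add_apply, mul_add]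
  map_smul' c v := by
    ext p
    simp [tensorVec, PiLp.smul_apply, smul_eq_mul]; ring

lemma tensorL_apply (u : EuclideanSpace ℂ ι) (v : EuclideanSpace ℂ κ) :
    tensorL u v = tensorVec u v := rfl

lemma inner_tensorVec (u u' : EuclideanSpace ℂ ι) (v v' : EuclideanSpace ℂ κ) :
    ⟪tensorVec u v, tensorVec u' v'⟫_ℂ = ⟪u, u'⟫_ℂ * ⟪v, v'⟫_ℂ := by
  simp only [PiLp.inner_apply, RCLike.inner_apply, tensorVec]
  rw [Fintype.sum_prod_type, Finset.sum_mul_sum]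
  refine Finset.sum_congr rfl fun i _ => Finset.sum_congr rfl fun j _ => by
    simp [map_mul]; ring

lemma norm_sq_euclid (x : EuclideanSpace ℂ ι) : ‖x‖ ^ 2 = ∑ i, ‖x i‖ ^ 2 := by
  rw [EuclideanSpace.norm_eq, Real.sq_sqrt]
  positivity

lemma norm_sq_tensorVec (u : EuclideanSpace ℂ ι) (v : EuclideanSpace ℂ κ) :
    ‖tensorVec u v‖ ^ 2 = (∑ i, ‖u i‖ ^ 2) * ∑ j, ‖v j‖ ^ 2 := by
  rw [norm_sq_euclid, Fintype.sum_prod_type, Finset.sum_mul_sum]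
  refine Finset.sum_congr rfl fun i _ => Finset.sum_congr rfl fun j _ => by
    simp [tensorVec, norm_mul, mul_pow]

lemma span_tensor_top [DecidableEq ι] [DecidableEq κ] :
    Submodule.span ℂ {x : EuclideanSpace ℂ (ι × κ) |
      ∃ u : EuclideanSpace ℂ ι, ∃ v : EuclideanSpace ℂ κ, x = tensorVec u v} = ⊤ := by
  rw [eq_top_iff, ← (EuclideanSpace.basisFun (ι × κ) ℂ).toBasis.span_eq]
  refine Submodule.span_le.2 ?_
  rintro x ⟨p, rfl⟩
  refine Submodule.subset_span ?_
  refine ⟨EuclideanSpace.single p.1 1, EuclideanSpace.single p.2 1, ?_⟩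
  rw [OrthonormalBasis.coe_toBasis, EuclideanSpace.basisFun_apply]
  ext q
  simp only [tensorVec, EuclideanSpace.single_apply, Prod.ext_iff, ite_and, mul_ite,
    mul_one, mul_zero, ite_mul, one_mul, zero_mul]
  by_cases h1 : q.1 = p.1 <;> by_cases h2 : q.2 = p.2 <;> simp [h1, h2]

end AngleBound

open AngleBound

/-- **The key angle bound `cos²θ ≤ 1 − 1/(T+1)`.** In `H = C ⊗ A ⊗ P` (clock, ancilla,
proof), with `α = (1/√(T+1)) Σ_t e_t`, `L₁ = span{e₀ ⊗ a₀ ⊗ p} + span{e_t ⊗ a ⊗ p : t ≥ 1}`,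
`L₂ = span{α ⊗ a ⊗ p}` and `L = span{α ⊗ a₀ ⊗ p}`: every unit vector `y ∈ L₂` orthogonal
to `L` has squared projection onto `L₁` at most `1 − 1/(T+1)`; in particular
`cos²θ(L₁ ⊓ Lᗮ, L₂ ⊓ Lᗮ) ≤ 1 − 1/(T+1)`. -/
theorem angle_bound
    (T dA dP : ℕ) (hT : 1 ≤ T) (hdA : 2 ≤ dA) (hdP : 1 ≤ dP)
    (a₀ : EuclideanSpace ℂ (Fin dA)) (ha₀ : ‖a₀‖ = 1)
    (α : EuclideanSpace ℂ (Fin (T + 1)))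
    (hα : α = ((Real.sqrt (T + 1) : ℂ))⁻¹ • ∑ t : Fin (T + 1), EuclideanSpace.single t 1)
    (L₁ L₂ L : Submodule ℂ (EuclideanSpace ℂ (Fin (T + 1) × (Fin dA × Fin dP))))
    (hL₁ : L₁ = Submodule.span ℂ
      ({x | ∃ p : EuclideanSpace ℂ (Fin dP),
          x = tensorVec (EuclideanSpace.single 0 1) (tensorVec a₀ p)} ∪
       {x | ∃ t : Fin (T + 1), t ≠ 0 ∧ ∃ a : EuclideanSpace ℂ (Fin dA),
          ∃ p : EuclideanSpace ℂ (Fin dP),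
          x = tensorVec (EuclideanSpace.single t 1) (tensorVec a p)}))
    (hL₂ : L₂ = Submodule.span ℂ
      {x | ∃ a : EuclideanSpace ℂ (Fin dA), ∃ p : EuclideanSpace ℂ (Fin dP),
          x = tensorVec α (tensorVec a p)})
    (hL : L = Submodule.span ℂ
      {x | ∃ p : EuclideanSpace ℂ (Fin dP), x = tensorVec α (tensorVec a₀ p)}) :
    (∀ y ∈ L₂, y ∈ Lᗮ → ‖y‖ = 1 →
      ‖((L₁.orthogonalProjection y : L₁) :
          EuclideanSpace ℂ (Fin (T + 1) × (Fin dA × Fin dP)))‖ ^ 2 ≤ 1 - 1 / (T + 1)) ∧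
    (sSup {r : ℝ | ∃ x ∈ L₁ ⊓ Lᗮ, ∃ y ∈ L₂ ⊓ Lᗮ, ‖x‖ = 1 ∧ ‖y‖ = 1 ∧ r = ‖⟪x, y⟫_ℂ‖}) ^ 2
      ≤ 1 - 1 / (T + 1) := by
  have hT1 : (0:ℝ) ≤ (T:ℝ) + 1 := by positivity
  have hT1' : ((T:ℝ) + 1) ≠ 0 := by positivity
  have hT1c : ((T:ℂ) + 1) ≠ 0 := by
    exact_mod_cast (Nat.cast_ne_zero (R := ℂ)).2 (Nat.succ_ne_zero T)
  -- value of each coordinate of α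
  have hαt : ∀ t : Fin (T + 1), α t = (((Real.sqrt ((T:ℝ) + 1)) : ℂ))⁻¹ := by
    intro t
    rw [hα]
    have hsum : (∑ t' : Fin (T + 1), EuclideanSpace.single t' (1:ℂ)) t = 1 := by
      rw [WithLp.ofLp_sum, Finset.sum_apply]
      simp [EuclideanSpace.single_apply]
    have : ((((Real.sqrt (T + 1)) : ℂ))⁻¹ •
        (∑ t' : Fin (T + 1), EuclideanSpace.single t' (1:ℂ))) t
        = (((Real.sqrt (T + 1)) : ℂ))⁻¹ *
        ((∑ t' : Fin (T + 1), EuclideanSpace.single t' (1:ℂ)) t) := rfl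
    rw [this, hsum, mul_one]
  have hsq : (Real.sqrt ((T:ℝ) + 1)) * (Real.sqrt ((T:ℝ) + 1)) = (T:ℝ) + 1 :=
    Real.mul_self_sqrt hT1
  -- ‖α t‖² = 1/(T+1)
  have hαnt : ∀ t : Fin (T + 1), ‖α t‖ ^ 2 = ((T:ℝ) + 1)⁻¹ := by
    intro t
    rw [hαt t, norm_inv, Complex.norm_real, Real.norm_eq_abs,
      abs_of_nonneg (Real.sqrt_nonneg _)]
    rw [← Real.sqrt_inv, Real.sq_sqrt (by positivity)]
  have hαnorm : ∑ t : Fin (T + 1), ‖α t‖ ^ 2 = 1 := by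
    simp only [hαnt]
    rw [Finset.sum_const, Finset.card_univ, Fintype.card_fin, nsmul_eq_mul]
    push_cast
    field_simp
  -- ⟪α, α⟫ = 1
  have hαinner : ⟪α, α⟫_ℂ = 1 := by
    have h2 : ∀ t : Fin (T+1), ⟪α t, α t⟫_ℂ = ((T:ℂ) + 1)⁻¹ := by
      intro t
      rw [RCLike.inner_apply, hαt t, map_inv₀, Complex.conj_ofReal, ← mul_inv,
        ← Complex.ofReal_mul, hsq]
      push_cast
      ring
    rw [PiLp.inner_apply]
    simp only [h2]
    rw [Finset.sum_const, Finset.card_univ, Fintype.card_fin, nsmul_eq_mul]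
    push_cast
    field_simp
  -- main pointwise bound
  have key : ∀ y ∈ L₂, y ∈ Lᗮ → ‖y‖ = 1 →
      ‖((L₁.orthogonalProjection y : L₁) :
          EuclideanSpace ℂ (Fin (T + 1) × (Fin dA × Fin dP)))‖ ^ 2 ≤ 1 - 1 / (T + 1) := by
    intro y hy₂ hyL hy1
    -- decompose y = α ⊗ w
    have himg : {x : EuclideanSpace ℂ (Fin (T + 1) × (Fin dA × Fin dP)) |
        ∃ a : EuclideanSpace ℂ (Fin dA), ∃ p : EuclideanSpace ℂ (Fin dP),
          x = tensorVec α (tensorVec a p)} =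
        (tensorL α) '' {x : EuclideanSpace ℂ (Fin dA × Fin dP) |
          ∃ a, ∃ p, x = tensorVec a p} := by
      ext x
      constructor
      · rintro ⟨a, p, rfl⟩
        exact ⟨tensorVec a p, ⟨a, p, rfl⟩, rfl⟩
      · rintro ⟨v, ⟨a, p, rfl⟩, rfl⟩
        exact ⟨a, p, rfl⟩
    rw [hL₂, himg, Submodule.span_image, span_tensor_top, Submodule.map_top,
      LinearMap.mem_range] at hy₂
    obtain ⟨w, hw⟩ := hy₂
    rw [tensorL_apply] at hw
    -- orthogonality to L: ⟪a₀ ⊗ p, w⟫ = 0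
    have hS : ∀ p : EuclideanSpace ℂ (Fin dP), ⟪tensorVec a₀ p, w⟫_ℂ = 0 := by
      intro p
      have h0 := (Submodule.mem_orthogonal L y).1 hyL
        (tensorVec α (tensorVec a₀ p))
        (by rw [hL]; exact Submodule.subset_span ⟨p, rfl⟩)
      rw [← hw, inner_tensorVec, hαinner, one_mul] at h0
      exact h0
    -- ∑ ‖w q‖² = 1
    have hW : ∑ q : Fin dA × Fin dP, ‖w q‖ ^ 2 = 1 := by
      have : ‖y‖ ^ 2 = 1 := by rw [hy1]; norm_num
      rw [← hw, norm_sq_tensorVec, hαnorm, one_mul] at this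
      exact this
    -- the candidate projection z
    set z : EuclideanSpace ℂ (Fin (T + 1) × (Fin dA × Fin dP)) :=
      ∑ t ∈ Finset.univ.filter (fun t : Fin (T + 1) => t ≠ 0),
        α t • (tensorL (EuclideanSpace.single t 1) w :
          EuclideanSpace ℂ (Fin (T + 1) × (Fin dA × Fin dP))) with hzdef
    -- pointwise formula for z
    have hzp : ∀ p : Fin (T + 1) × (Fin dA × Fin dP),
        z p = if p.1 = 0 then 0 else α p.1 * w p.2 := by
      intro p
      rw [hzdef, WithLp.ofLp_sum, Finset.sum_apply]
      have : ∀ t ∈ Finset.univ.filter (fun t : Fin (T + 1) => t ≠ 0),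
          (α t • (tensorL (EuclideanSpace.single t 1) w :
            EuclideanSpace ℂ (Fin (T + 1) × (Fin dA × Fin dP)))) p
          = if p.1 = t then α t * w p.2 else 0 := by
        intro t _
        have : (α t • (tensorL (EuclideanSpace.single t 1) w :
            EuclideanSpace ℂ (Fin (T + 1) × (Fin dA × Fin dP)))) p
            = α t * ((EuclideanSpace.single t (1:ℂ)) p.1 * w p.2) := rfl
        rw [this, EuclideanSpace.single_apply]
        by_cases h : p.1 = t <;> simp [h]
      rw [Finset.sum_congr rfl this]
      by_cases hp : p.1 = 0
      · rw [Finset.sum_eq_zero]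
        · simp [hp]
        · intro t ht
          simp only [Finset.mem_filter] at ht
          have : p.1 ≠ t := by rw [hp]; exact fun h => ht.2 h.symm
          simp [this]
      · rw [Finset.sum_eq_single p.1]
        · simp [hp]
        · intro t _ hne
          have : p.1 ≠ t := fun h => hne h.symm
          simp [this]
        · intro h
          exact absurd (Finset.mem_filter.2 ⟨Finset.mem_univ p.1, hp⟩) h
    -- z ∈ L₁
    have hz₁ : z ∈ L₁ := by
      rw [hzdef]
      refine Submodule.sum_mem _ fun t ht => Submodule.smul_mem _ _ ?_
      simp only [Finset.mem_filter] at ht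
      have hwtop : w ∈ Submodule.span ℂ {x : EuclideanSpace ℂ (Fin dA × Fin dP) |
          ∃ a, ∃ p, x = tensorVec a p} := by
        rw [span_tensor_top]; trivial
      have : (tensorL (EuclideanSpace.single t 1) w :
          EuclideanSpace ℂ (Fin (T + 1) × (Fin dA × Fin dP))) ∈
          Submodule.map (tensorL (EuclideanSpace.single t (1:ℂ)))
            (Submodule.span ℂ {x : EuclideanSpace ℂ (Fin dA × Fin dP) |
              ∃ a, ∃ p, x = tensorVec a p}) :=
        Submodule.mem_map_of_mem hwtop
      rw [← Submodule.span_image] at this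
      refine Submodule.span_le.2 ?_ this
      rintro x ⟨v, ⟨a, p, rfl⟩, rfl⟩
      rw [hL₁]
      exact Submodule.subset_span (Or.inr ⟨t, ht.2, a, p, rfl⟩)
    -- y - z = α 0 • (e₀ ⊗ w)
    have hyz : y - z = α 0 • (tensorL (EuclideanSpace.single (0 : Fin (T+1)) 1) w :
        EuclideanSpace ℂ (Fin (T + 1) × (Fin dA × Fin dP))) := by
      ext p
      have hl : (y - z) p = y p - z p := rfl
      have hr : (α 0 • (tensorL (EuclideanSpace.single (0 : Fin (T+1)) 1) w :
          EuclideanSpace ℂ (Fin (T + 1) × (Fin dA × Fin dP)))) p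
          = α 0 * ((EuclideanSpace.single (0 : Fin (T+1)) (1:ℂ)) p.1 * w p.2) := rfl
      rw [hl, hr, hzp p, ← hw]
      have hyp : (tensorVec α w) p = α p.1 * w p.2 := rfl
      rw [hyp, EuclideanSpace.single_apply]
      by_cases h : p.1 = 0
      · rw [h]; simp
      · simp [h]
    -- y - z ⊥ L₁
    have horth : ∀ u ∈ L₁, ⟪y - z, u⟫_ℂ = 0 := by
      intro u hu
      rw [hL₁] at hu
      induction hu using Submodule.span_induction with
      | mem x hx =>
        rcases hx with ⟨p, rfl⟩ | ⟨t, ht, a, p, rfl⟩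
        · rw [hyz, tensorL_apply, inner_smul_left, inner_tensorVec]
          have : ⟪w, tensorVec a₀ p⟫_ℂ = 0 := inner_eq_zero_symm.1 (hS p)
          rw [this, mul_zero, mul_zero]
        · rw [hyz, tensorL_apply, inner_smul_left, inner_tensorVec]
          have : ⟪EuclideanSpace.single (0 : Fin (T+1)) (1:ℂ),
              EuclideanSpace.single t (1:ℂ)⟫_ℂ = 0 := by
            rw [EuclideanSpace.inner_single_left, EuclideanSpace.single_apply]
            simp [Ne.symm ht]
          rw [this, zero_mul, mul_zero]
      | zero => rw [inner_zero_right]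
      | add x₁ x₂ hx₁ hx₂ h1 h2 => rw [inner_add_right, h1, h2, add_zero]
      | smul c x hx h => rw [inner_smul_right, h, mul_zero]
    -- the projection is z
    have hproj : ((L₁.orthogonalProjection y : L₁) :
        EuclideanSpace ℂ (Fin (T + 1) × (Fin dA × Fin dP))) = z :=
      Submodule.eq_starProjection_of_mem_of_inner_eq_zero hz₁ horth
    rw [hproj]
    -- compute ‖z‖²
    have hnz : ‖z‖ ^ 2 = (T:ℝ) * ((T:ℝ) + 1)⁻¹ := by
      rw [norm_sq_euclid, Fintype.sum_prod_type]
      have hrow : ∀ t : Fin (T + 1),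
          (∑ q : Fin dA × Fin dP, ‖z (t, q)‖ ^ 2)
          = if t = 0 then 0 else ((T:ℝ) + 1)⁻¹ := by
        intro t
        by_cases h : t = 0
        · simp only [h, if_true]
          refine Finset.sum_eq_zero fun q _ => ?_
          rw [hzp]
          simp [h]
        · simp only [h, if_false]
          have : ∀ q : Fin dA × Fin dP, ‖z (t, q)‖ ^ 2 = ((T:ℝ) + 1)⁻¹ * ‖w q‖ ^ 2 := by
            intro q
            rw [hzp (t, q)]
            simp only [h, if_false]
            rw [norm_mul, mul_pow, hαnt t]
          rw [Finset.sum_congr rfl fun q _ => this q, ← Finset.mul_sum, hW, mul_one]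
      rw [Finset.sum_congr rfl fun t _ => hrow t, Fin.sum_univ_succ]
      simp only [if_true, Fin.succ_ne_zero, if_false, zero_add]
      rw [Finset.sum_const, Finset.card_univ, Fintype.card_fin, nsmul_eq_mul]
    rw [hnz]
    have : (1:ℝ) - 1 / ((T:ℝ) + 1) = (T:ℝ) * ((T:ℝ) + 1)⁻¹ := by
      field_simp
      ring
    rw [this]
  refine ⟨key, ?_⟩
  -- part 2
  have h1 : (0:ℝ) ≤ 1 - 1 / ((T:ℝ) + 1) := by
    have : 1 / ((T:ℝ) + 1) ≤ 1 := by
      rw [div_le_one (by positivity)]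
      linarith [Nat.cast_nonneg (α := ℝ) T]
    linarith
  set c₀ : ℝ := Real.sqrt (1 - 1 / ((T:ℝ) + 1)) with hc₀def
  have hc₀ : 0 ≤ c₀ := Real.sqrt_nonneg _
  have hcsq : c₀ ^ 2 = 1 - 1 / ((T:ℝ) + 1) := Real.sq_sqrt h1
  set S : Set ℝ := {r : ℝ | ∃ x ∈ L₁ ⊓ Lᗮ, ∃ y ∈ L₂ ⊓ Lᗮ,
    ‖x‖ = 1 ∧ ‖y‖ = 1 ∧ r = ‖⟪x, y⟫_ℂ‖} with hSdef
  have hub : ∀ r ∈ S, r ≤ c₀ := by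
    rintro r ⟨x, hx, y, hy, hx1, hy1, rfl⟩
    have hxL₁ : x ∈ L₁ := (Submodule.mem_inf.1 hx).1
    have hyL₂ : y ∈ L₂ := (Submodule.mem_inf.1 hy).1
    have hyLo : y ∈ Lᗮ := (Submodule.mem_inf.1 hy).2
    have hbound := key y hyL₂ hyLo hy1
    have hsub : ⟪x, y - ((L₁.orthogonalProjection y : L₁) :
        EuclideanSpace ℂ (Fin (T + 1) × (Fin dA × Fin dP)))⟫_ℂ = 0 :=
      (Submodule.mem_orthogonal L₁ _).1 (Submodule.sub_starProjection_mem_orthogonal (K := L₁) y) x hxL₁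
    rw [inner_sub_right, sub_eq_zero] at hsub
    rw [hsub]
    calc ‖⟪x, ((L₁.orthogonalProjection y : L₁) :
          EuclideanSpace ℂ (Fin (T + 1) × (Fin dA × Fin dP)))⟫_ℂ‖
        ≤ ‖x‖ * ‖((L₁.orthogonalProjection y : L₁) :
          EuclideanSpace ℂ (Fin (T + 1) × (Fin dA × Fin dP)))‖ := norm_inner_le_norm _ _
      _ = ‖((L₁.orthogonalProjection y : L₁) :
          EuclideanSpace ℂ (Fin (T + 1) × (Fin dA × Fin dP)))‖ := by rw [hx1, one_mul]
      _ ≤ c₀ := by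
          rw [← Real.sqrt_sq (norm_nonneg _), hc₀def]
          exact Real.sqrt_le_sqrt hbound
  have hsup_le : sSup S ≤ c₀ := Real.sSup_le hub hc₀
  have hsup_nonneg : 0 ≤ sSup S := Real.sSup_nonneg fun r hr => by
    obtain ⟨x, _, y, _, _, _, rfl⟩ := hr
    exact norm_nonneg _
  calc (sSup S) ^ 2 ≤ c₀ ^ 2 := pow_le_pow_left₀ hsup_nonneg hsup_le 2
    _ = 1 - 1 / ((T:ℝ) + 1) := hcsq
end
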